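/- arXiv:math/9903115 — 2 statements merged into one kernel-verified Lean document; each statement's English description precedes it below -/
import Mathlib

section
/- Let L = Zα₁ ⊕ Zα₂ ⊕ Zα₃ be a rank-3 lattice with ⟨αᵢ, αⱼ⟩ = 2δᵢⱼ, and let N = {β ∈ L : ⟨α₁+α₂+α₃, β⟩ ≡ 0 (mod 4)}. Then N equals the sublattice of L generated by all elements αᵢ ± αⱼ for 1 ≤ i, j ≤ 3. -/
/-- The basis vectors α₁, α₂, α₃ of the lattice `L = Zα₁ ⊕ Zα₂ ⊕ Zα₃`. -/
def latAlpha (i : Fin 3) : Fin 3 → ℤ := Pi.single i 1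

/-- The bilinear form on `L` determined by `⟨αᵢ, αⱼ⟩ = 2δᵢⱼ`. -/
def latB (x y : Fin 3 → ℤ) : ℤ := 2 * ∑ i, x i * y i

lemma latB_eval (β : Fin 3 → ℤ) :
    latB (latAlpha 0 + latAlpha 1 + latAlpha 2) β = 2 * (β 0 + β 1 + β 2) := by
  simp [latB, latAlpha, Fin.sum_univ_three, Pi.single_apply]

/-- `N = {β ∈ L : ⟨α₁+α₂+α₃, β⟩ ≡ 0 (mod 4)}` equals the sublattice generated by
the elements `αᵢ ± αⱼ`. -/
theorem stmt0 :
    {β : Fin 3 → ℤ | (4 : ℤ) ∣ latB (latAlpha 0 + latAlpha 1 + latAlpha 2) β} =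
      (AddSubgroup.closure {v : Fin 3 → ℤ | ∃ i j : Fin 3,
        v = latAlpha i + latAlpha j ∨ v = latAlpha i - latAlpha j} :
        Set (Fin 3 → ℤ)) := by
  set S : Set (Fin 3 → ℤ) := {v : Fin 3 → ℤ | ∃ i j : Fin 3,
        v = latAlpha i + latAlpha j ∨ v = latAlpha i - latAlpha j} with hS
  ext β
  simp only [Set.mem_setOf_eq, SetLike.mem_coe]
  constructor
  · intro h
    rw [latB_eval] at h
    obtain ⟨m, hm⟩ : (2:ℤ) ∣ β 0 + β 1 + β 2 := by omega
    have hu : latAlpha 0 + latAlpha 1 ∈ AddSubgroup.closure S :=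
      AddSubgroup.subset_closure ⟨0, 1, Or.inl rfl⟩
    have hv : latAlpha 0 - latAlpha 1 ∈ AddSubgroup.closure S :=
      AddSubgroup.subset_closure ⟨0, 1, Or.inr rfl⟩
    have hw : latAlpha 1 + latAlpha 2 ∈ AddSubgroup.closure S :=
      AddSubgroup.subset_closure ⟨1, 2, Or.inl rfl⟩
    have key : β = (m - β 2) • (latAlpha 0 + latAlpha 1)
        + (β 0 - m + β 2) • (latAlpha 0 - latAlpha 1)
        + (β 2) • (latAlpha 1 + latAlpha 2) := by
      funext i
      fin_cases i <;>
        simp [latAlpha, Pi.single_apply, smul_eq_mul] <;> omega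
    rw [key]
    exact add_mem (add_mem (AddSubgroup.zsmul_mem _ hu _) (AddSubgroup.zsmul_mem _ hv _))
      (AddSubgroup.zsmul_mem _ hw _)
  · intro h
    induction h using AddSubgroup.closure_induction with
    | mem v hv =>
        obtain ⟨i, j, hv | hv⟩ := hv <;> subst hv <;> rw [latB_eval] <;>
          fin_cases i <;> fin_cases j <;> simp [latAlpha, Pi.single_apply] <;> decide
    | zero => rw [latB_eval]; simp
    | add x y _ _ hx hy =>
        have : latB (latAlpha 0 + latAlpha 1 + latAlpha 2) (x + y)
            = latB (latAlpha 0 + latAlpha 1 + latAlpha 2) x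
              + latB (latAlpha 0 + latAlpha 1 + latAlpha 2) y := by
          simp only [latB_eval]; simp; ring
        rw [this]; exact dvd_add hx hy
    | neg x _ hx =>
        have : latB (latAlpha 0 + latAlpha 1 + latAlpha 2) (-x)
            = -latB (latAlpha 0 + latAlpha 1 + latAlpha 2) x := by
          simp only [latB_eval]; simp; ring
        rw [this]; exact dvd_neg.2 hx
end

section
/- Every element of the coset D + α₂ (where D = E ⊕ F as above) can be uniquely written as an orthogonal sum x + y with x ∈ E + √2(β₁−β₂)/3 and y ∈ F + γ/3. -/
def latAlphaQ (i : Fin 3) : Fin 3 → ℚ := Pi.single i 1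

def latBQ (x y : Fin 3 → ℚ) : ℚ := 2 * ∑ i, x i * y i

def latEQ : AddSubgroup (Fin 3 → ℚ) :=
  AddSubgroup.closure {latAlphaQ 0 + latAlphaQ 1, -(latAlphaQ 1) + latAlphaQ 2}

def gammaQ : Fin 3 → ℚ := -(latAlphaQ 0) + latAlphaQ 1 + latAlphaQ 2

def latFQ : AddSubgroup (Fin 3 → ℚ) := AddSubgroup.zmultiples gammaQ

def latDQ : AddSubgroup (Fin 3 → ℚ) := latEQ ⊔ latFQ

def cosetE : Fin 3 → ℚ := (3 : ℚ)⁻¹ • ((latAlphaQ 0 + latAlphaQ 1) - (-(latAlphaQ 1) + latAlphaQ 2))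

def cosetF : Fin 3 → ℚ := (3 : ℚ)⁻¹ • gammaQ

/-- Every element of the coset `D + α₂` can be uniquely written as an orthogonal
sum `x + y` with `x ∈ E + √2(β₁−β₂)/3` and `y ∈ F + γ/3`. -/
theorem stmt7 :
    ∀ z : Fin 3 → ℚ, z - latAlphaQ 1 ∈ latDQ →
      ∃! p : (Fin 3 → ℚ) × (Fin 3 → ℚ),
        p.1 - cosetE ∈ latEQ ∧ p.2 - cosetF ∈ latFQ ∧ z = p.1 + p.2 ∧
          latBQ p.1 p.2 = 0 := by
  intro z hz
  rw [latDQ, AddSubgroup.mem_sup] at hz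
  obtain ⟨e, he, f, hf, hef⟩ := hz
  rw [latEQ, AddSubgroup.mem_closure_pair] at he
  obtain ⟨a, b, rfl⟩ := he
  rw [latFQ, AddSubgroup.mem_zmultiples_iff] at hf
  obtain ⟨c, rfl⟩ := hf
  have hzval : ∀ i : Fin 3, z i =
      (cosetE i + (a : ℚ) * (latAlphaQ 0 + latAlphaQ 1) i + (b : ℚ) * (-(latAlphaQ 1) + latAlphaQ 2) i)
      + (cosetF i + (c : ℚ) * gammaQ i) := by
    intro i
    have h := congrFun hef i
    simp only [Pi.add_apply, Pi.smul_apply, zsmul_eq_mul, Pi.sub_apply, Pi.neg_apply,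
      Pi.mul_apply, Pi.intCast_apply] at h
    fin_cases i <;>
      simp_all [cosetE, cosetF, gammaQ, latAlphaQ, Pi.single_apply] <;> linarith
  refine ⟨⟨cosetE + a • (latAlphaQ 0 + latAlphaQ 1) + b • (-(latAlphaQ 1) + latAlphaQ 2),
      cosetF + c • gammaQ⟩, ⟨?_, ?_, ?_, ?_⟩, ?_⟩
  · rw [latEQ, AddSubgroup.mem_closure_pair]
    exact ⟨a, b, by rw [add_assoc, add_sub_cancel_left]⟩
  · rw [latFQ, AddSubgroup.mem_zmultiples_iff]
    exact ⟨c, (add_sub_cancel_left cosetF _).symm⟩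
  · funext i
    have h2 := hzval i
    show z i = _
    simp only [Pi.add_apply, Pi.smul_apply, zsmul_eq_mul, Pi.neg_apply,
      Pi.mul_apply, Pi.intCast_apply] at h2 ⊢
    linarith
  · show latBQ _ _ = 0
    rw [latBQ, Fin.sum_univ_three]
    simp [cosetE, cosetF, gammaQ, latAlphaQ, Pi.single_apply]
    ring
  · rintro ⟨q1, q2⟩ ⟨hq1, hq2, hqz, -⟩
    dsimp only at hq1 hq2 hqz
    rw [latEQ, AddSubgroup.mem_closure_pair] at hq1
    obtain ⟨a', b', hq1⟩ := hq1
    rw [latFQ, AddSubgroup.mem_zmultiples_iff] at hq2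
    obtain ⟨c', hq2⟩ := hq2
    have hq1' : q1 = cosetE + (a' • (latAlphaQ 0 + latAlphaQ 1) + b' • (-(latAlphaQ 1) + latAlphaQ 2)) :=
      (sub_eq_iff_eq_add'.mp hq1.symm)
    have hq2' : q2 = cosetF + c' • gammaQ := (sub_eq_iff_eq_add'.mp hq2.symm)
    have key : ∀ i : Fin 3,
        (a' : ℚ) * (latAlphaQ 0 + latAlphaQ 1) i + (b' : ℚ) * (-(latAlphaQ 1) + latAlphaQ 2) i + (c' : ℚ) * gammaQ i
        = (a : ℚ) * (latAlphaQ 0 + latAlphaQ 1) i + (b : ℚ) * (-(latAlphaQ 1) + latAlphaQ 2) i + (c : ℚ) * gammaQ i := by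
      intro i
      have h1 := congrFun hqz i
      rw [hq1', hq2'] at h1
      have h2 := hzval i
      simp only [Pi.add_apply, Pi.smul_apply, zsmul_eq_mul, Pi.neg_apply,
        Pi.mul_apply, Pi.intCast_apply] at h1 h2 ⊢
      linarith
    have k0 := key 0
    have k1 := key 1
    have k2 := key 2
    simp [latAlphaQ, gammaQ, Pi.single_apply] at k0 k1 k2
    have ha : (a' : ℚ) = a := by linarith
    have hb : (b' : ℚ) = b := by linarith
    have hc : (c' : ℚ) = c := by linarith
    have ha' : a' = a := by exact_mod_cast ha
    have hb' : b' = b := by exact_mod_cast hb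
    have hc' : c' = c := by exact_mod_cast hc
    subst ha' hb' hc'
    refine Prod.ext ?_ ?_
    · show q1 = _
      rw [hq1']; abel
    · show q2 = _
      rw [hq2']
end
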